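/- Let u be a recurrent infinite word and m a natural number. Suppose that for every n at least one of the following holds: (i) there is a unique left special factor w of u of length n, and #E_ℓ(w) = m; (ii) there is a unique right special factor w of u of length n, and #E_r(w) = m. Then u satisfies property R_m, i.e., every factor of u has exactly m return words. -/

import Mathlib

variable {A : Type*}

/-- The factor of `u` of length `n` starting at position `j`. -/
def factorAt (u : ℕ → A) (j n : ℕ) : List A :=
  (List.range n).map (fun i => u (j + i))

/-- `j` is an occurrence of the finite word `w` in `u`. -/
def OccursAt (u : ℕ → A) (w : List A) (j : ℕ) : Prop :=
  factorAt u j w.length = w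

/-- `w` is a factor of the infinite word `u`. -/
def IsFactor (u : ℕ → A) (w : List A) : Prop :=
  ∃ j, OccursAt u w j

/-- `v` is a return word of `w` in `u`: the word between two successive occurrences of `w`. -/
def IsReturnWord (u : ℕ → A) (w v : List A) : Prop :=
  ∃ j k, j < k ∧ OccursAt u w j ∧ OccursAt u w k ∧
    (∀ l, j < l → l < k → ¬ OccursAt u w l) ∧ v = factorAt u j (k - j)

/-- The set `R(w)` of return words of `w` in `u`. -/
def returnWords (u : ℕ → A) (w : List A) : Set (List A) :=
  {v | IsReturnWord u w v}

/-- Property `R_m`: every factor of `u` has exactly `m` return words. -/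
def PropertyR (u : ℕ → A) (m : ℕ) : Prop :=
  ∀ w, IsFactor u w → (returnWords u w).Finite ∧ (returnWords u w).ncard = m

/-- The set of left extensions of `w`. -/
def leftExt (u : ℕ → A) (w : List A) : Set A := {a | IsFactor u (a :: w)}

/-- The set of right extensions of `w`. -/
def rightExt (u : ℕ → A) (w : List A) : Set A := {b | IsFactor u (w ++ [b])}

def LeftSpecial (u : ℕ → A) (w : List A) : Prop := 2 ≤ (leftExt u w).ncard

def RightSpecial (u : ℕ → A) (w : List A) : Prop := 2 ≤ (rightExt u w).ncard

/-- The set of pairs `(a, b)` such that `a w b` is a factor of `u`. -/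
def extPairs (u : ℕ → A) (w : List A) : Set (A × A) :=
  {p | IsFactor u (p.1 :: (w ++ [p.2]))}

/-- The bilateral order `B(w)`. -/
noncomputable def bilateralOrder (u : ℕ → A) (w : List A) : ℤ :=
  ((extPairs u w).ncard : ℤ) - (leftExt u w).ncard - (rightExt u w).ncard + 1

/-- `w` is a weak bispecial factor of `u`. -/
def WeakBispecial (u : ℕ → A) (w : List A) : Prop :=
  IsFactor u w ∧ bilateralOrder u w < 0

/-- The factor complexity of `u`. -/
noncomputable def Complexity (u : ℕ → A) (n : ℕ) : ℕ :=
  {w : List A | w.length = n ∧ IsFactor u w}.ncard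

/-- `u` is recurrent: every factor occurs at least twice. -/
def Recurrent (u : ℕ → A) : Prop :=
  ∀ w, IsFactor u w → ∃ j k, j < k ∧ OccursAt u w j ∧ OccursAt u w k

/-- `u` is uniformly recurrent. -/
def UniformlyRecurrent (u : ℕ → A) : Prop :=
  ∀ n : ℕ, ∃ N : ℕ, ∀ w, IsFactor u w → w.length = N →
    ∀ v, IsFactor u v → v.length = n → v <:+: w

def EventuallyPeriodic (u : ℕ → A) : Prop :=
  ∃ p, 0 < p ∧ ∃ N, ∀ n, N ≤ n → u (n + p) = u n

/-- `w` is a maximal right special factor. -/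
def MaximalRightSpecial (u : ℕ → A) (w : List A) : Prop :=
  IsFactor u w ∧ RightSpecial u w ∧
    ∀ v, IsFactor u v → RightSpecial u v → w <:+ v → v = w

/-- The return word `v` of `w` starts with the letter `b`. -/
def StartsWithLetter (w v : List A) (b : A) : Prop := (w ++ [b]) <+: (v ++ w)
namespace RmAux

variable {A : Type*} {u : ℕ → A}

theorem fa_len (u : ℕ → A) (j n : ℕ) : (factorAt u j n).length = n := by
  simp [factorAt]

theorem fa_getElem (u : ℕ → A) {j n i : ℕ} (hi : i < n) :
    (factorAt u j n)[i]'(by simpa [fa_len] using hi) = u (j + i) := by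
  simp [factorAt]

theorem fa_congr {j j' n : ℕ} (h : ∀ i < n, u (j + i) = u (j' + i)) :
    factorAt u j n = factorAt u j' n := by
  unfold factorAt
  apply List.map_congr_left
  intro i hi
  exact h i (List.mem_range.mp hi)

theorem fa_eq_imp {j j' n : ℕ} (h : factorAt u j n = factorAt u j' n) :
    ∀ i < n, u (j + i) = u (j' + i) := by
  intro i hi
  have hl : i < (factorAt u j n).length := by simpa [fa_len] using hi
  have h2 := List.getElem_of_eq h hl
  rw [fa_getElem u hi] at h2
  rw [h2]
  exact fa_getElem u hi

theorem occ_def {w : List A} {j : ℕ} : OccursAt u w j ↔ factorAt u j w.length = w := Iff.rfl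

theorem occ_factorAt (u : ℕ → A) (j n : ℕ) : OccursAt u (factorAt u j n) j := by
  unfold OccursAt
  rw [fa_len]

theorem occ_agree {w : List A} {j j' : ℕ} (h : OccursAt u w j) (h' : OccursAt u w j') :
    ∀ i < w.length, u (j + i) = u (j' + i) :=
  fa_eq_imp (h.trans h'.symm)

theorem occ_of_agree {w : List A} {j j' : ℕ} (h : OccursAt u w j)
    (hag : ∀ i < w.length, u (j' + i) = u (j + i)) : OccursAt u w j' := by
  unfold OccursAt at *
  rw [fa_congr hag, h]

theorem fa_append (u : ℕ → A) (j a b : ℕ) :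
    factorAt u j (a + b) = factorAt u j a ++ factorAt u (j + a) b := by
  unfold factorAt
  rw [List.range_add, List.map_append, List.map_map]
  congr 1
  apply List.map_congr_left
  intro i _
  simp [Function.comp]
  ring_nf

theorem occ_append_iff {x y : List A} {j : ℕ} :
    OccursAt u (x ++ y) j ↔ OccursAt u x j ∧ OccursAt u y (j + x.length) := by
  unfold OccursAt
  rw [List.length_append, fa_append]
  constructor
  · intro h
    have := List.append_inj h (by simp [fa_len])
    exact ⟨this.1, this.2⟩
  · rintro ⟨h1, h2⟩
    rw [h1, h2]

theorem fa_one (u : ℕ → A) (j : ℕ) : factorAt u j 1 = [u j] := by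
  simp [factorAt, List.range_succ]

theorem occ_singleton_iff {a : A} {j : ℕ} : OccursAt u [a] j ↔ u j = a := by
  unfold OccursAt
  simp [fa_one]

theorem occ_cons_iff {a : A} {z : List A} {j : ℕ} :
    OccursAt u (a :: z) j ↔ u j = a ∧ OccursAt u z (j + 1) := by
  rw [show a :: z = [a] ++ z from rfl, occ_append_iff, occ_singleton_iff]
  simp

theorem fa_succ (u : ℕ → A) (j n : ℕ) :
    factorAt u j (n + 1) = factorAt u j n ++ [u (j + n)] := by
  rw [fa_append, fa_one]

theorem isFactor_factorAt (u : ℕ → A) (j n : ℕ) : IsFactor u (factorAt u j n) :=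
  ⟨j, occ_factorAt u j n⟩

theorem occ_transfer {V x : List A} {p q s : ℕ} (hV1 : OccursAt u V p) (hV2 : OccursAt u V q)
    (hx : OccursAt u x (p + s)) (hs : s + x.length ≤ V.length) : OccursAt u x (q + s) := by
  apply occ_of_agree hx
  intro i hi
  have h1 := occ_agree hV2 hV1 (s + i) (by omega)
  have e1 : q + (s + i) = q + s + i := by omega
  have e2 : p + (s + i) = p + s + i := by omega
  rw [e1, e2] at h1
  exact h1

theorem fa_getD {j n i : ℕ} (hi : i < n) (d : A) :
    (factorAt u j n).getD i d = u (j + i) := by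
  rw [List.getD_eq_getElem _ _ (by simpa [fa_len] using hi)]
  exact fa_getElem u hi

theorem occ_getD {x : List A} {p i : ℕ} (h : OccursAt u x p) (hi : i < x.length) (d : A) :
    x.getD i d = u (p + i) := by
  have h2 : x.getD i d = (factorAt u p x.length).getD i d := by rw [h]
  rw [h2, fa_getD hi]

end RmAux
namespace RmAux

variable {A : Type*} [Fintype A] {u : ℕ → A}

theorem occ_unbounded (hrec : Recurrent u) {w : List A} (hw : IsFactor u w) :
    ∀ N, ∃ j, N ≤ j ∧ OccursAt u w j := by
  intro N
  induction N with
  | zero =>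
    obtain ⟨j, hj⟩ := hw
    exact ⟨j, Nat.zero_le _, hj⟩
  | succ N ih =>
    obtain ⟨j, hjN, hj⟩ := ih
    obtain ⟨j₁, k₁, hlt, _, h₂⟩ := hrec (factorAt u 0 (j + w.length)) (isFactor_factorAt u 0 _)
    refine ⟨k₁ + j, by omega, ?_⟩
    have h0 : OccursAt u w (0 + j) := by simpa using hj
    have := occ_transfer (occ_factorAt u 0 (j + w.length)) h₂ h0 (by rw [fa_len])
    simpa using this

theorem exists_next (hrec : Recurrent u) {w : List A} (hw : IsFactor u w) (j : ℕ) :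
    ∃ k, j < k ∧ OccursAt u w k ∧ ∀ l, j < l → l < k → ¬ OccursAt u w l := by
  classical
  obtain ⟨j', hj', hocc'⟩ := occ_unbounded hrec hw (j + 1)
  have hex : ∃ d, OccursAt u w (j + 1 + d) :=
    ⟨j' - (j + 1), by rwa [show j + 1 + (j' - (j + 1)) = j' by omega]⟩
  refine ⟨j + 1 + Nat.find hex, by omega, Nat.find_spec hex, ?_⟩
  intro l hl1 hl2 hocc
  have hlt : l - (j + 1) < Nat.find hex := by omega
  exact Nat.find_min hex hlt (by rwa [show j + 1 + (l - (j + 1)) = l by omega])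

theorem two_le_ncard {β : Type*} {S : Set β} (hS : S.Finite) {a b : β}
    (ha : a ∈ S) (hb : b ∈ S) (hne : a ≠ b) : 2 ≤ S.ncard := by
  have hsub : ({a, b} : Set β) ⊆ S := by
    intro x hx
    rcases hx with rfl | rfl
    · exact ha
    · exact hb
  calc 2 = ({a, b} : Set β).ncard := (Set.ncard_pair hne).symm
    _ ≤ S.ncard := Set.ncard_le_ncard hsub hS

theorem eq_of_ncard_le_one {β : Type*} {S : Set β} (hS : S.Finite) (h1 : S.ncard ≤ 1)
    {a b : β} (ha : a ∈ S) (hb : b ∈ S) : b = a := by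
  by_contra hne
  have := two_le_ncard hS hb ha hne
  omega

theorem exists_pair_of_two_le_ncard {β : Type*} {S : Set β} (h : 2 ≤ S.ncard) :
    ∃ a ∈ S, ∃ b ∈ S, a ≠ b := by
  have hne : S.Nonempty := by
    rcases S.eq_empty_or_nonempty with rfl | h'
    · simp [Set.ncard_empty] at h
    · exact h'
  obtain ⟨a, ha⟩ := hne
  by_contra hcon
  push_neg at hcon
  have hsub : S ⊆ {a} := fun b hb => hcon b hb a ha
  have := Set.ncard_le_ncard hsub (Set.finite_singleton a)
  simp [Set.ncard_singleton] at this
  omega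

theorem rightExt_mem_of_occ {z : List A} {j : ℕ} (h : OccursAt u z j) :
    u (j + z.length) ∈ rightExt u z :=
  ⟨j, occ_append_iff.mpr ⟨h, occ_singleton_iff.mpr rfl⟩⟩

theorem leftExt_mem_of_occ {z : List A} {j : ℕ} (h : OccursAt u z (j + 1)) :
    u j ∈ leftExt u z :=
  ⟨j, occ_cons_iff.mpr ⟨rfl, h⟩⟩

theorem forced_right {z : List A} {j : ℕ} (hocc : OccursAt u z j) (hns : ¬ RightSpecial u z) :
    ∀ c, IsFactor u (z ++ [c]) → c = u (j + z.length) := by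
  intro c hc
  unfold RightSpecial at hns
  push_neg at hns
  exact eq_of_ncard_le_one (Set.toFinite _) (by omega) (rightExt_mem_of_occ hocc) hc

theorem occ_right_ext {z : List A} {b : A} (hforced : ∀ c, IsFactor u (z ++ [c]) → c = b) :
    ∀ p, OccursAt u z p ↔ OccursAt u (z ++ [b]) p := by
  intro p
  constructor
  · intro hp
    have hc : IsFactor u (z ++ [u (p + z.length)]) := rightExt_mem_of_occ hp
    have hb := hforced _ hc
    rw [← hb]
    exact occ_append_iff.mpr ⟨hp, occ_singleton_iff.mpr rfl⟩
  · intro hp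
    exact (occ_append_iff.mp hp).1

theorem occ_left_ext {z : List A} {a : A} (hforced : ∀ c, IsFactor u (c :: z) → c = a) :
    ∀ p, OccursAt u (a :: z) p ↔ OccursAt u z (p + 1) := by
  intro p
  constructor
  · intro hp
    exact (occ_cons_iff.mp hp).2
  · intro hp
    have hf : IsFactor u (u p :: z) := ⟨p, occ_cons_iff.mpr ⟨rfl, hp⟩⟩
    exact occ_cons_iff.mpr ⟨hforced _ hf, hp⟩

theorem returnWords_congr {z z' : List A} (h : ∀ p, OccursAt u z p ↔ OccursAt u z' p) :
    returnWords u z = returnWords u z' := by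
  ext v
  constructor
  · rintro ⟨j, k, h1, h2, h3, h4, h5⟩
    exact ⟨j, k, h1, (h j).mp h2, (h k).mp h3, fun l hl1 hl2 hocc => h4 l hl1 hl2 ((h l).mpr hocc), h5⟩
  · rintro ⟨j, k, h1, h2, h3, h4, h5⟩
    exact ⟨j, k, h1, (h j).mpr h2, (h k).mpr h3, fun l hl1 hl2 hocc => h4 l hl1 hl2 ((h l).mp hocc), h5⟩

theorem realize_anywhere (hrec : Recurrent u) {z v : List A} (hv : v ∈ returnWords u z) (N : ℕ) :
    ∃ j k, N ≤ j ∧ j < k ∧ OccursAt u z j ∧ OccursAt u z k ∧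
      (∀ l, j < l → l < k → ¬ OccursAt u z l) ∧ v = factorAt u j (k - j) := by
  obtain ⟨j₀, k₀, hlt, h1, h2, h3, h4⟩ := hv
  have hVocc : OccursAt u (factorAt u j₀ (k₀ - j₀ + z.length)) j₀ := occ_factorAt _ _ _
  obtain ⟨p, hpN, hp⟩ := occ_unbounded hrec ⟨j₀, hVocc⟩ N
  have hL : (factorAt u j₀ (k₀ - j₀ + z.length)).length = k₀ - j₀ + z.length := fa_len _ _ _
  refine ⟨p, p + (k₀ - j₀), hpN, by omega, ?_, ?_, ?_, ?_⟩
  · have h0 : OccursAt u z (j₀ + 0) := by simpa using h1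
    have := occ_transfer hVocc hp h0 (by omega)
    simpa using this
  · have hk : OccursAt u z (j₀ + (k₀ - j₀)) := by rwa [show j₀ + (k₀ - j₀) = k₀ by omega]
    exact occ_transfer hVocc hp hk (by omega)
  · intro l hl1 hl2 hocc
    have hocc' : OccursAt u z (p + (l - p)) := by rwa [show p + (l - p) = l by omega]
    have hback := occ_transfer hp hVocc hocc' (by omega)
    exact h3 (j₀ + (l - p)) (by omega) (by omega) hback
  · rw [h4, show p + (k₀ - j₀) - p = k₀ - j₀ by omega]
    apply fa_congr
    intro i hi
    exact occ_agree hVocc hp i (by omega)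

end RmAux
namespace RmAux

set_option linter.unusedSectionVars false

variable {A : Type*} [Fintype A] {u : ℕ → A}

theorem agree_right {n : ℕ} {r : List A} (hrlen : r.length = n)
    (huniq : ∀ v, IsFactor u v → v.length = n → RightSpecial u v → v = r)
    {j j' k k' : ℕ} (h1 : OccursAt u r j) (h1' : OccursAt u r j')
    (hlt : j < k) (hlt' : j' < k')
    (h3 : ∀ l, j < l → l < k → ¬ OccursAt u r l)
    (h3' : ∀ l, j' < l → l < k' → ¬ OccursAt u r l)
    (hb : u (j + n) = u (j' + n)) :
    ∀ i, i < (k - j) + n → i < (k' - j') + n → u (j + i) = u (j' + i) := by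
  intro i
  induction i using Nat.strong_induction_on with
  | _ i ih =>
    intro hi hi'
    rcases lt_trichotomy i n with hin | rfl | hin
    · exact occ_agree h1 h1' i (by omega)
    · exact hb
    · by_contra hneq
      have hx1 : OccursAt u (factorAt u (j + (i - n)) n) (j + (i - n)) := occ_factorAt _ _ _
      have hx2 : OccursAt u (factorAt u (j + (i - n)) n) (j' + (i - n)) := by
        apply occ_of_agree hx1
        intro d hd
        have hdn : d < n := by rwa [fa_len] at hd
        have hh := ih (i - n + d) (by omega) (by omega) (by omega)
        rw [show j + (i - n + d) = j + (i - n) + d by omega,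
            show j' + (i - n + d) = j' + (i - n) + d by omega] at hh
        exact hh.symm
      have hm1 : u (j + i) ∈ rightExt u (factorAt u (j + (i - n)) n) := by
        have := rightExt_mem_of_occ hx1
        rwa [fa_len, show j + (i - n) + n = j + i by omega] at this
      have hm2 : u (j' + i) ∈ rightExt u (factorAt u (j + (i - n)) n) := by
        have := rightExt_mem_of_occ hx2
        rwa [fa_len, show j' + (i - n) + n = j' + i by omega] at this
      have hsp : RightSpecial u (factorAt u (j + (i - n)) n) :=
        two_le_ncard (Set.toFinite _) hm1 hm2 hneq
      have hxr := huniq _ ⟨_, hx1⟩ (fa_len _ _ _) hsp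
      rw [hxr] at hx1
      exact h3 (j + (i - n)) (by omega) (by omega) hx1

theorem ret_len_eq_right {n : ℕ} {r : List A}
    {j j' k k' : ℕ}
    (hlt : j < k) (hlt' : j' < k') (h2 : OccursAt u r k) (hrlen : r.length = n)
    (h3' : ∀ l, j' < l → l < k' → ¬ OccursAt u r l)
    (hagr : ∀ i, i < (k - j) + n → i < (k' - j') + n → u (j + i) = u (j' + i))
    (hle : k - j ≤ k' - j') : k - j = k' - j' := by
  have hocc : OccursAt u r (j' + (k - j)) := by
    apply occ_of_agree h2
    intro i hi
    have hin : i < n := by rwa [hrlen] at hi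
    have hh := hagr ((k - j) + i) (by omega) (by omega)
    rw [show j + (k - j + i) = k + i by omega,
        show j' + (k - j + i) = j' + (k - j) + i by omega] at hh
    exact hh.symm
  rcases lt_trichotomy (j' + (k - j)) k' with hc | hc | hc
  · exact absurd hocc (h3' _ (by omega) hc)
  · omega
  · omega

theorem good_special_right (hrec : Recurrent u) {m : ℕ} {r : List A}
    (hm : (rightExt u r).ncard = m)
    (huniq : ∀ v, IsFactor u v → v.length = r.length → RightSpecial u v → v = r) :
    (returnWords u r).Finite ∧ (returnWords u r).ncard = m := by
  classical
  set n := r.length with hn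
  set φ : List A → A := fun v => (v ++ r).getD n (u 0) with hφ
  have hval : ∀ v j k, j < k → OccursAt u r j → OccursAt u r k → v = factorAt u j (k - j) →
      φ v = u (j + n) := by
    intro v j k hlt hj hk hv
    have hocc : OccursAt u (v ++ r) j := by
      apply occ_append_iff.mpr
      constructor
      · rw [hv]; exact occ_factorAt _ _ _
      · rw [hv, fa_len, show j + (k - j) = k by omega]; exact hk
    have hlen : n < (v ++ r).length := by
      rw [List.length_append, hv, fa_len]; omega
    rw [hφ]
    simp only
    rw [occ_getD hocc hlen]
  have hinj : Set.InjOn φ (returnWords u r) := by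
    rintro v ⟨j, k, hlt, h1, h2, h3, hv⟩ v' ⟨j', k', hlt', h1', h2', h3', hv'⟩ hφeq
    rw [hval v j k hlt h1 h2 hv, hval v' j' k' hlt' h1' h2' hv'] at hφeq
    have hagr := agree_right (u := u) rfl huniq h1 h1' hlt hlt' h3 h3' hφeq
    have hagr' : ∀ i, i < (k' - j') + n → i < (k - j) + n → u (j' + i) = u (j + i) :=
      fun i hi hi' => (hagr i hi' hi).symm
    have hdeq : k - j = k' - j' := by
      rcases Nat.le_total (k - j) (k' - j') with hle | hle
      · exact ret_len_eq_right hlt hlt' h2 rfl h3' hagr hle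
      · exact (ret_len_eq_right hlt' hlt h2' rfl h3 hagr' hle).symm
    rw [hv, hv', hdeq]
    exact fa_congr (fun i hi => hagr i (by omega) (by omega))
  have himeq : φ '' returnWords u r = rightExt u r := by
    apply Set.Subset.antisymm
    · rintro b ⟨v, ⟨j, k, hlt, h1, h2, h3, hv⟩, rfl⟩
      rw [hval v j k hlt h1 h2 hv]
      exact rightExt_mem_of_occ h1
    · intro b hb
      obtain ⟨j₀, hj₀⟩ := hb
      have hro : OccursAt u r j₀ := (occ_append_iff.mp hj₀).1
      obtain ⟨k, hk1, hk2, hk3⟩ := exists_next hrec ⟨j₀, hro⟩ j₀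
      refine ⟨factorAt u j₀ (k - j₀), ⟨j₀, k, hk1, hro, hk2, hk3, rfl⟩, ?_⟩
      rw [hval _ j₀ k hk1 hro hk2 rfl]
      exact occ_singleton_iff.mp (occ_append_iff.mp hj₀).2
  constructor
  · exact Set.Finite.of_finite_image (himeq ▸ Set.toFinite _) hinj
  · rw [← hm, ← himeq, Set.ncard_image_of_injOn hinj]

end RmAux
namespace RmAux

set_option linter.unusedSectionVars false
set_option linter.unusedVariables false

variable {A : Type*} [Fintype A] {u : ℕ → A}

theorem agree_left {n : ℕ} {l : List A} (hllen : l.length = n)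
    (huniq : ∀ v, IsFactor u v → v.length = n → LeftSpecial u v → v = l)
    {j j' k k' : ℕ}
    (hok : OccursAt u l k) (hok' : OccursAt u l k')
    (hlt : j < k) (hlt' : j' < k')
    (h3 : ∀ x, j < x → x < k → ¬ OccursAt u l x)
    (h3' : ∀ x, j' < x → x < k' → ¬ OccursAt u l x)
    (hb : u (k - 1) = u (k' - 1)) :
    ∀ t, 1 ≤ t → t + j ≤ k → t + j' ≤ k' → u (k - t) = u (k' - t) := by
  intro t
  induction t using Nat.strong_induction_on with
  | _ t ih =>
    intro ht1 ht2 ht3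
    rcases eq_or_lt_of_le ht1 with heq | ht
    · rw [← heq] at *
      exact hb
    · by_contra hneq
      have hx1 : OccursAt u (factorAt u (k - t + 1) n) (k - t + 1) := occ_factorAt _ _ _
      have hx2 : OccursAt u (factorAt u (k - t + 1) n) (k' - t + 1) := by
        apply occ_of_agree hx1
        intro d hd
        have hdn : d < n := by rwa [fa_len] at hd
        rcases Nat.lt_or_ge (d + 1) t with hc | hc
        · have hh := ih (t - 1 - d) (by omega) (by omega) (by omega) (by omega)
          rw [show k - (t - 1 - d) = k - t + 1 + d by omega,
              show k' - (t - 1 - d) = k' - t + 1 + d by omega] at hh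
          exact hh.symm
        · have hh := occ_agree hok hok' (d - (t - 1)) (by omega)
          rw [show k + (d - (t - 1)) = k - t + 1 + d by omega,
              show k' + (d - (t - 1)) = k' - t + 1 + d by omega] at hh
          exact hh.symm
      have hm1 : u (k - t) ∈ leftExt u (factorAt u (k - t + 1) n) := by
        apply leftExt_mem_of_occ
        rwa [show k - t + 1 = (k - t) + 1 from rfl] at hx1
      have hm2 : u (k' - t) ∈ leftExt u (factorAt u (k - t + 1) n) := by
        apply leftExt_mem_of_occ
        rwa [show k' - t + 1 = (k' - t) + 1 from rfl] at hx2
      have hsp : LeftSpecial u (factorAt u (k - t + 1) n) :=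
        two_le_ncard (Set.toFinite _) hm1 hm2 hneq
      have hxl := huniq _ ⟨_, hx1⟩ (fa_len _ _ _) hsp
      rw [hxl] at hx1
      exact h3 (k - t + 1) (by omega) (by omega) hx1

theorem ret_len_eq_left {n : ℕ} {l : List A} (hllen : l.length = n)
    {j j' k k' : ℕ}
    (hoj : OccursAt u l j) (hok : OccursAt u l k) (hok' : OccursAt u l k')
    (hlt : j < k) (hlt' : j' < k')
    (h3' : ∀ x, j' < x → x < k' → ¬ OccursAt u l x)
    (hag : ∀ t, 1 ≤ t → t + j ≤ k → t + j' ≤ k' → u (k - t) = u (k' - t))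
    (hle : k - j ≤ k' - j') : k - j = k' - j' := by
  have hocc : OccursAt u l (k' - (k - j)) := by
    apply occ_of_agree hoj
    intro i hi
    have hin : i < n := by rwa [hllen] at hi
    rcases Nat.lt_or_ge i (k - j) with hc | hc
    · have hh := hag ((k - j) - i) (by omega) (by omega) (by omega)
      rw [show k - (k - j - i) = j + i by omega,
          show k' - (k - j - i) = k' - (k - j) + i by omega] at hh
      exact hh.symm
    · have hh := occ_agree hok' hok (i - (k - j)) (by omega)
      rw [show k' + (i - (k - j)) = k' - (k - j) + i by omega,
          show k + (i - (k - j)) = j + i by omega] at hh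
      exact hh
  rcases lt_trichotomy (k' - (k - j)) j' with hc | hc | hc
  · omega
  · omega
  · exact absurd hocc (h3' _ hc (by omega))

theorem good_special_left (hrec : Recurrent u) {m : ℕ} {l : List A}
    (hm : (leftExt u l).ncard = m)
    (huniq : ∀ v, IsFactor u v → v.length = l.length → LeftSpecial u v → v = l) :
    (returnWords u l).Finite ∧ (returnWords u l).ncard = m := by
  classical
  set φ : List A → A := fun v => v.getD (v.length - 1) (u 0) with hφ
  have hval : ∀ v j k, j < k → OccursAt u l k → v = factorAt u j (k - j) →
      φ v = u (k - 1) := by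
    intro v j k hlt hk hv
    rw [hφ]
    simp only
    rw [hv, fa_len, fa_getD (by omega)]
    congr 1
    omega
  have hinj : Set.InjOn φ (returnWords u l) := by
    rintro v ⟨j, k, hlt, h1, h2, h3, hv⟩ v' ⟨j', k', hlt', h1', h2', h3', hv'⟩ hφeq
    rw [hval v j k hlt h2 hv, hval v' j' k' hlt' h2' hv'] at hφeq
    have hagr := agree_left (u := u) rfl huniq h2 h2' hlt hlt' h3 h3' hφeq
    have hagr' : ∀ t, 1 ≤ t → t + j' ≤ k' → t + j ≤ k → u (k' - t) = u (k - t) :=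
      fun t h1t h2t h3t => (hagr t h1t h3t h2t).symm
    have hdeq : k - j = k' - j' := by
      rcases Nat.le_total (k - j) (k' - j') with hle | hle
      · exact ret_len_eq_left rfl h1 h2 h2' hlt hlt' h3' hagr hle
      · exact (ret_len_eq_left rfl h1' h2' h2 hlt' hlt h3 hagr' hle).symm
    rw [hv, hv', hdeq]
    apply fa_congr
    intro i hi
    have hh := hagr ((k' - j') - i) (by omega) (by omega) (by omega)
    rw [show k - (k' - j' - i) = j + i by omega,
        show k' - (k' - j' - i) = j' + i by omega] at hh
    exact hh
  have himeq : φ '' returnWords u l = leftExt u l := by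
    apply Set.Subset.antisymm
    · rintro b ⟨v, ⟨j, k, hlt, h1, h2, h3, hv⟩, rfl⟩
      rw [hval v j k hlt h2 hv]
      apply leftExt_mem_of_occ
      rwa [show k - 1 + 1 = k by omega]
    · intro a ha
      obtain ⟨q₀, hq₀⟩ := ha
      have hlf : IsFactor u l := ⟨q₀ + 1, (occ_cons_iff.mp hq₀).2⟩
      obtain ⟨f₀, hf₀⟩ := hlf
      obtain ⟨q, hqf, hq⟩ := occ_unbounded hrec ⟨q₀, hq₀⟩ f₀
      have hql : OccursAt u l (q + 1) := (occ_cons_iff.mp hq).2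
      have hqa : u q = a := (occ_cons_iff.mp hq).1
      set prev := Nat.findGreatest (OccursAt u l) q with hprev
      have hprevocc : OccursAt u l prev := Nat.findGreatest_spec hqf hf₀
      have hprevle : prev ≤ q := Nat.findGreatest_le q
      have hbet : ∀ x, prev < x → x < q + 1 → ¬ OccursAt u l x := by
        intro x hx1 hx2 hocc
        have := Nat.le_findGreatest (by omega : x ≤ q) hocc
        omega
      refine ⟨factorAt u prev (q + 1 - prev), ⟨prev, q + 1, by omega, hprevocc, hql, hbet, rfl⟩, ?_⟩
      rw [hval _ prev (q + 1) (by omega) hql rfl]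
      simpa using hqa
  constructor
  · exact Set.Finite.of_finite_image (himeq ▸ Set.toFinite _) hinj
  · rw [← hm, ← himeq, Set.ncard_image_of_injOn hinj]

end RmAux
namespace RmAux

set_option linter.unusedSectionVars false
set_option linter.unusedVariables false

variable {A : Type*} [Fintype A] {u : ℕ → A}

theorem fa_cons (u : ℕ → A) (j d : ℕ) :
    factorAt u j (1 + d) = u j :: factorAt u (j + 1) d := by
  rw [fa_append, fa_one]
  rfl

theorem fa_head_cons {j d : ℕ} (hd : 1 ≤ d) :
    factorAt u j d = u j :: (factorAt u j d).drop 1 := by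
  conv_lhs => rw [show d = 1 + (d - 1) by omega, fa_cons]
  rw [show d = 1 + (d - 1) by omega, fa_cons]
  simp

theorem fa_shift {j d : ℕ} (hd : 1 ≤ d) :
    factorAt u (j + 1) d = (factorAt u j d).drop 1 ++ [u (j + d)] := by
  have h3 : u j :: factorAt u (j + 1) d = factorAt u j d ++ [u (j + d)] := by
    rw [← fa_succ, show d + 1 = 1 + d by omega, fa_cons]
  have h4 := congrArg (List.drop 1) h3
  simp only [List.drop_succ_cons, List.drop_zero] at h4
  rw [h4, List.drop_append_of_le_length (by rw [fa_len]; omega)]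

theorem fa_dropLast (u : ℕ → A) (j d : ℕ) :
    (factorAt u j (d + 1)).dropLast = factorAt u j d := by
  rw [fa_succ, List.dropLast_concat]

theorem microL (hrec : Recurrent u) {m : ℕ} {z : List A} {a : A}
    (hforced : ∀ c, IsFactor u (c :: z) → c = a)
    (hGood : (returnWords u (a :: z)).Finite ∧ (returnWords u (a :: z)).ncard = m) :
    (returnWords u z).Finite ∧ (returnWords u z).ncard = m := by
  classical
  have hFmem : ∀ v' ∈ returnWords u (a :: z),
      (v'.drop 1 ++ [a]) ∈ returnWords u z ∧ a :: (v'.drop 1 ++ [a]).dropLast = v' := by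
    rintro v' ⟨j, k, hlt, h1, h2, h3, hv⟩
    have hja : u j = a := (occ_cons_iff.mp h1).1
    have hka : u k = a := (occ_cons_iff.mp h2).1
    have hzj : OccursAt u z (j + 1) := (occ_cons_iff.mp h1).2
    have hzk : OccursAt u z (k + 1) := (occ_cons_iff.mp h2).2
    constructor
    · refine ⟨j + 1, k + 1, by omega, hzj, hzk, ?_, ?_⟩
      · intro p hp1 hp2 hocc
        have hfac : IsFactor u (u (p - 1) :: z) :=
          ⟨p - 1, occ_cons_iff.mpr ⟨rfl, by rwa [show p - 1 + 1 = p by omega]⟩⟩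
        have hpa := hforced _ hfac
        have : OccursAt u (a :: z) (p - 1) := by
          rw [← hpa]
          exact occ_cons_iff.mpr ⟨rfl, by rwa [show p - 1 + 1 = p by omega]⟩
        exact h3 (p - 1) (by omega) (by omega) this
      · have e1 : k + 1 - (j + 1) = k - j := by omega
        rw [e1, fa_shift (by omega), ← hv, show j + (k - j) = k by omega, hka]
    · rw [List.dropLast_concat, ← hja]
      rw [hv]
      exact (fa_head_cons (by omega)).symm
  have hGmem : ∀ v ∈ returnWords u z,
      (a :: v.dropLast) ∈ returnWords u (a :: z) ∧ (a :: v.dropLast).drop 1 ++ [a] = v := by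
    intro v hv
    obtain ⟨j, k, hj1, hlt, h1, h2, h3, hveq⟩ := realize_anywhere hrec hv 1
    have hja : u (j - 1) = a :=
      hforced _ ⟨j - 1, occ_cons_iff.mpr ⟨rfl, by rwa [show j - 1 + 1 = j by omega]⟩⟩
    have hka : u (k - 1) = a :=
      hforced _ ⟨k - 1, occ_cons_iff.mpr ⟨rfl, by rwa [show k - 1 + 1 = k by omega]⟩⟩
    obtain ⟨d, hd⟩ : ∃ d, k - j = d + 1 := ⟨k - j - 1, by omega⟩
    have hdL : v.dropLast = factorAt u j d := by
      rw [hveq, hd, fa_dropLast]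
    have hlast : v = v.dropLast ++ [a] := by
      rw [hdL, hveq, hd, fa_succ, show j + d = k - 1 by omega, hka]
    constructor
    · refine ⟨j - 1, k - 1, by omega, ?_, ?_, ?_, ?_⟩
      · exact occ_cons_iff.mpr ⟨hja, by rwa [show j - 1 + 1 = j by omega]⟩
      · exact occ_cons_iff.mpr ⟨hka, by rwa [show k - 1 + 1 = k by omega]⟩
      · intro p hp1 hp2 hocc
        have := (occ_cons_iff.mp hocc).2
        exact h3 (p + 1) (by omega) (by omega) this
      · rw [show k - 1 - (j - 1) = 1 + d by omega, fa_cons,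
            show j - 1 + 1 = j by omega, hja, ← hdL]
    · rw [List.drop_succ_cons, List.drop_zero]
      exact hlast.symm
  have himg : (fun v' => v'.drop 1 ++ [a]) '' returnWords u (a :: z) = returnWords u z := by
    apply Set.Subset.antisymm
    · rintro v ⟨v', hv', rfl⟩
      exact (hFmem v' hv').1
    · intro v hv
      refine ⟨a :: v.dropLast, (hGmem v hv).1, ?_⟩
      exact (hGmem v hv).2
  have hinj : Set.InjOn (fun v' => v'.drop 1 ++ [a]) (returnWords u (a :: z)) := by
    intro v1 h1 v2 h2 he
    dsimp only at he
    rw [← (hFmem v1 h1).2, ← (hFmem v2 h2).2, he]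
  constructor
  · rw [← himg] at *
    exact hGood.1.image _
  · rw [← himg, Set.ncard_image_of_injOn hinj, hGood.2]

end RmAux
namespace RmAux

set_option linter.unusedSectionVars false
set_option linter.unusedVariables false

variable {A : Type*} [Fintype A] {u : ℕ → A}

theorem fa_take {j n s : ℕ} (hs : s ≤ n) : (factorAt u j n).take s = factorAt u j s := by
  rw [show n = s + (n - s) by omega, fa_append]
  exact List.take_left' (fa_len u j s)

theorem fa_drop1 (u : ℕ → A) (j d : ℕ) : (factorAt u j (1 + d)).drop 1 = factorAt u (j + 1) d := by
  rw [fa_cons]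
  simp

theorem factors_finite (u : ℕ → A) (L : ℕ) :
    {x : List A | x.length = L ∧ IsFactor u x}.Finite := by
  apply Set.Finite.subset (Set.finite_range (fun f : Fin L → A => List.ofFn f))
  rintro x ⟨hlen, -⟩
  subst hlen
  exact ⟨fun i => x.get i, List.ofFn_get x⟩

theorem card_step {α β : Type*} {S : Set α} {T : Set β} (hS : S.Finite) {f : α → β}
    (hmap : ∀ x ∈ S, f x ∈ T) (hsurj : ∀ t ∈ T, ∃ x ∈ S, f x = t)
    {x₁ x₂ : α} (h₁ : x₁ ∈ S) (h₂ : x₂ ∈ S) (hne : x₁ ≠ x₂) (hfe : f x₁ = f x₂) :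
    T.ncard + 1 ≤ S.ncard := by
  have hsub : T ⊆ f '' (S \ {x₁}) := by
    intro t ht
    obtain ⟨x, hx, rfl⟩ := hsurj t ht
    by_cases hx1 : x = x₁
    · exact ⟨x₂, ⟨h₂, fun hh => hne (Set.mem_singleton_iff.mp hh).symm⟩, by rw [← hfe, hx1]⟩
    · exact ⟨x, ⟨hx, by simp [hx1]⟩, rfl⟩
  have h4 : T.ncard ≤ (S \ {x₁}).ncard :=
    le_trans (Set.ncard_le_ncard hsub ((hS.diff).image f)) (Set.ncard_image_le (hS.diff))
  have h5 : (S \ {x₁}).ncard + 1 = S.ncard := Set.ncard_diff_singleton_add_one h₁ hS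
  omega

theorem complexity_step (hrec : Recurrent u) {m : ℕ}
    (hH : ∀ n : ℕ,
      (∃ w, IsFactor u w ∧ w.length = n ∧ LeftSpecial u w ∧ (leftExt u w).ncard = m ∧
        ∀ v, IsFactor u v → v.length = n → LeftSpecial u v → v = w) ∨
      (∃ w, IsFactor u w ∧ w.length = n ∧ RightSpecial u w ∧ (rightExt u w).ncard = m ∧
        ∀ v, IsFactor u v → v.length = n → RightSpecial u v → v = w))
    (L : ℕ) :
    {x : List A | x.length = L ∧ IsFactor u x}.ncard + 1 ≤
      {x : List A | x.length = L + 1 ∧ IsFactor u x}.ncard := by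
  classical
  rcases hH L with ⟨l, hlf, hllen, hlLS, -, -⟩ | ⟨r, hrf, hrlen, hrRS, -, -⟩
  · -- left special: use drop 1
    obtain ⟨a, ha, c, hc, hac⟩ := exists_pair_of_two_le_ncard hlLS
    apply card_step (factors_finite u (L + 1)) (f := fun x => x.drop 1)
      (x₁ := a :: l) (x₂ := c :: l)
    · rintro x ⟨hlen, j, hocc⟩
      have hxe : x = factorAt u j (1 + L) := by
        have h' := occ_def.mp hocc
        rw [hlen] at h'
        rw [← h', Nat.add_comm]
      refine ⟨by simp [hlen], ⟨j + 1, ?_⟩⟩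
      rw [hxe, fa_drop1]
      exact occ_factorAt _ _ _
    · rintro y ⟨hyl, hyf⟩
      obtain ⟨j, hj1, hy⟩ := occ_unbounded hrec hyf 1
      refine ⟨factorAt u (j - 1) (1 + L), ⟨by rw [fa_len]; omega, isFactor_factorAt _ _ _⟩, ?_⟩
      rw [fa_drop1, show j - 1 + 1 = j by omega]
      have h' := occ_def.mp hy
      rw [hyl] at h'
      exact h'
    · exact ⟨by simp [hllen], ha⟩
    · exact ⟨by simp [hllen], hc⟩
    · intro heq
      simp only [List.cons.injEq] at heq
      exact hac heq.1
    · rfl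
  · -- right special: use take L
    obtain ⟨b, hb, c, hc, hbc⟩ := exists_pair_of_two_le_ncard hrRS
    apply card_step (factors_finite u (L + 1)) (f := fun x => x.take L)
      (x₁ := r ++ [b]) (x₂ := r ++ [c])
    · rintro x ⟨hlen, j, hocc⟩
      have hxe : x = factorAt u j (L + 1) := by
        have h' := occ_def.mp hocc
        rw [hlen] at h'
        exact h'.symm
      refine ⟨by simp [hlen], ⟨j, ?_⟩⟩
      rw [hxe, fa_take (by omega : L ≤ L + 1)]
      exact occ_factorAt _ _ _
    · rintro y ⟨hyl, j, hy⟩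
      refine ⟨factorAt u j (L + 1), ⟨fa_len _ _ _, isFactor_factorAt _ _ _⟩, ?_⟩
      rw [fa_take (by omega : L ≤ L + 1)]
      have h' := occ_def.mp hy
      rw [hyl] at h'
      exact h'
    · exact ⟨by simp [hrlen], hb⟩
    · exact ⟨by simp [hrlen], hc⟩
    · intro heq
      simp only [List.append_cancel_left_eq, List.cons.injEq] at heq
      exact hbc heq.1
    · show List.take L (r ++ [b]) = List.take L (r ++ [c])
      rw [List.take_left' hrlen, List.take_left' hrlen]

theorem complexity_lower (hrec : Recurrent u) {m : ℕ}
    (hH : ∀ n : ℕ,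
      (∃ w, IsFactor u w ∧ w.length = n ∧ LeftSpecial u w ∧ (leftExt u w).ncard = m ∧
        ∀ v, IsFactor u v → v.length = n → LeftSpecial u v → v = w) ∨
      (∃ w, IsFactor u w ∧ w.length = n ∧ RightSpecial u w ∧ (rightExt u w).ncard = m ∧
        ∀ v, IsFactor u v → v.length = n → RightSpecial u v → v = w)) :
    ∀ L, L + 1 ≤ {x : List A | x.length = L ∧ IsFactor u x}.ncard := by
  intro L
  induction L with
  | zero =>
    have h0 : ({([] : List A)} : Set (List A)) ⊆ {x : List A | x.length = 0 ∧ IsFactor u x} := by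
      rintro x rfl
      exact ⟨rfl, ⟨0, by simp [OccursAt, factorAt]⟩⟩
    have := Set.ncard_le_ncard h0 (factors_finite u 0)
    simpa using this
  | succ L ih =>
    have := complexity_step hrec hH L
    omega

theorem periodic_contra (hrec : Recurrent u) {m : ℕ}
    (hH : ∀ n : ℕ,
      (∃ w, IsFactor u w ∧ w.length = n ∧ LeftSpecial u w ∧ (leftExt u w).ncard = m ∧
        ∀ v, IsFactor u v → v.length = n → LeftSpecial u v → v = w) ∨
      (∃ w, IsFactor u w ∧ w.length = n ∧ RightSpecial u w ∧ (rightExt u w).ncard = m ∧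
        ∀ v, IsFactor u v → v.length = n → RightSpecial u v → v = w))
    {N g : ℕ} (hg : 0 < g) (hper : ∀ q, N ≤ q → u (q + g) = u q) : False := by
  classical
  have hmin : ∀ j L, ∃ j' < N + g, factorAt u j' L = factorAt u j L := by
    intro j L
    induction j using Nat.strong_induction_on with
    | _ j ih =>
      by_cases hj : j < N + g
      · exact ⟨j, hj, rfl⟩
      · obtain ⟨j', hj', he⟩ := ih (j - g) (by omega)
        refine ⟨j', hj', he.trans ?_⟩
        apply fa_congr
        intro i hi
        have hh := hper (j - g + i) (by omega)
        rw [show j - g + i + g = j + i by omega] at hh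
        rw [← hh]
  have hsub : {x : List A | x.length = N + g ∧ IsFactor u x} ⊆
      (fun j => factorAt u j (N + g)) '' (Set.Iio (N + g)) := by
    rintro x ⟨hlen, j, hocc⟩
    obtain ⟨j', hj', he⟩ := hmin j (N + g)
    refine ⟨j', hj', ?_⟩
    dsimp only
    rw [he]
    have h' := occ_def.mp hocc
    rw [hlen] at h'
    exact h'
  have h1 := complexity_lower hrec hH (N + g)
  have hIio : (Set.Iio (N + g) : Set ℕ) = ↑(Finset.range (N + g)) := by
    ext x
    simp
  have h2 : {x : List A | x.length = N + g ∧ IsFactor u x}.ncard ≤ N + g := by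
    calc {x : List A | x.length = N + g ∧ IsFactor u x}.ncard
        ≤ ((fun j => factorAt u j (N + g)) '' (Set.Iio (N + g))).ncard :=
          Set.ncard_le_ncard hsub ((Set.finite_Iio _).image _)
      _ ≤ (Set.Iio (N + g) : Set ℕ).ncard := Set.ncard_image_le (Set.finite_Iio _)
      _ = N + g := by rw [hIio, Set.ncard_coe_finset, Finset.card_range]
  omega

end RmAux
namespace RmAux

set_option linter.unusedSectionVars false
set_option linter.unusedVariables false

theorem gaps_const {O : ℕ → Prop}
    (hub : ∀ M, ∃ p, M ≤ p ∧ O p)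
    (htr₁ : ∀ p p' x, O p → O p' → p < p' → O x → x ≤ p → O (x + (p' - p)))
    (htr₂ : ∀ p p' y, O p → O p' → p < p' → O y → p' - p ≤ y → y ≤ p' → O (y - (p' - p))) :
    ∃ g, 0 < g ∧ ∀ p p', O p → O p' → p < p' →
      (∀ x, p < x → x < p' → ¬ O x) → p' - p = g := by
  classical
  obtain ⟨p₀, -, hp₀⟩ := hub 0
  have hmin_ex : ∃ p, O p := ⟨p₀, hp₀⟩
  set a := Nat.find hmin_ex with hadef
  have ha : O a := Nat.find_spec hmin_ex
  have hamin : ∀ x, O x → a ≤ x := fun x hx => Nat.find_min' hmin_ex hx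
  have hnext_ex : ∃ d, O (a + 1 + d) := by
    obtain ⟨p, hp1, hp2⟩ := hub (a + 1)
    exact ⟨p - (a + 1), by rwa [show a + 1 + (p - (a + 1)) = p by omega]⟩
  set b := a + 1 + Nat.find hnext_ex with hbdef
  have hb : O b := Nat.find_spec hnext_ex
  have hab : a < b := by omega
  have hbbet : ∀ x, a < x → x < b → ¬ O x := by
    intro x hx1 hx2 hox
    have hlt : x - (a + 1) < Nat.find hnext_ex := by omega
    exact Nat.find_min hnext_ex hlt (by rwa [show a + 1 + (x - (a + 1)) = x by omega])
  refine ⟨b - a, by omega, ?_⟩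
  intro p
  induction p using Nat.strong_induction_on with
  | _ p ih =>
    intro p' hp hp' hlt hbet
    by_cases hpa : p = a
    · subst hpa
      rcases lt_trichotomy p' b with hc | hc | hc
      · exact absurd hp' (hbbet _ hlt hc)
      · rw [hc]
      · exact absurd hb (hbet b (by omega) hc)
    · have hpa' : a < p := lt_of_le_of_ne (hamin p hp) (Ne.symm hpa)
      set prev := Nat.findGreatest O (p - 1) with hprevdef
      have hprevocc : O prev := Nat.findGreatest_spec (by omega : a ≤ p - 1) ha
      have hprevle : prev ≤ p - 1 := Nat.findGreatest_le (p - 1)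
      have hprevbet : ∀ x, prev < x → x < p → ¬ O x := by
        intro x hx1 hx2 hox
        have := Nat.le_findGreatest (by omega : x ≤ p - 1) hox
        omega
      have hgp : p - prev = b - a := ih prev (by omega) p hprevocc hp (by omega) hprevbet
      -- triple argument
      have hOprevd : O (prev + (p' - p)) := htr₁ p p' prev hp hp' hlt hprevocc (by omega)
      rcases lt_trichotomy (prev + (p' - p)) p with hc | hc | hc
      · -- then p - (p' - p) contradicts (prev, p) consecutive
        have hOd : O (p - (p' - p)) := htr₂ p p' p hp hp' hlt hp (by omega) (by omega)
        exact absurd hOd (hprevbet _ (by omega) (by omega))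
      · omega
      · exact absurd hOprevd (hbet _ hc (by omega))

end RmAux
/-- If `u` is recurrent and for every `n` there is a unique left special
factor of length `n`, with `m` left extensions, or a unique right special factor of
length `n`, with `m` right extensions, then `u` satisfies property `R_m`. -/
theorem propertyR_of_unique_special [Fintype A] (u : ℕ → A) (m : ℕ) (hrec : Recurrent u)
    (h : ∀ n : ℕ,
      (∃ w, IsFactor u w ∧ w.length = n ∧ LeftSpecial u w ∧ (leftExt u w).ncard = m ∧
        ∀ v, IsFactor u v → v.length = n → LeftSpecial u v → v = w) ∨
      (∃ w, IsFactor u w ∧ w.length = n ∧ RightSpecial u w ∧ (rightExt u w).ncard = m ∧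
        ∀ v, IsFactor u v → v.length = n → RightSpecial u v → v = w)) :
    PropertyR u m := by
  classical
  open RmAux in
  intro w hw
  by_contra hbad
  -- one extension step
  have hstep : ∀ z : List A, IsFactor u z →
      ¬ ((returnWords u z).Finite ∧ (returnWords u z).ncard = m) →
      ∃ z', IsFactor u z' ∧ ¬ ((returnWords u z').Finite ∧ (returnWords u z').ncard = m) ∧
        ((∃ b, z' = z ++ [b] ∧ ∀ p, OccursAt u z p ↔ OccursAt u z' p) ∨
         (∃ a, z' = a :: z ∧ ∀ p, OccursAt u z' p ↔ OccursAt u z (p + 1))) := by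
    intro z hzf hzbad
    by_cases hRS : RightSpecial u z
    · rcases h z.length with ⟨l, hlf, hllen, hlLS, hlm, hluniq⟩ | ⟨r, hrf, hrlen, hrRS, hrm, hruniq⟩
      · by_cases hzLS : LeftSpecial u z
        · have hzl : z = l := hluniq z hzf rfl hzLS
          have huniq' : ∀ v, IsFactor u v → v.length = l.length → LeftSpecial u v → v = l :=
            fun v h1 h2 h3 => hluniq v h1 (h2.trans hllen) h3
          exact absurd (by rw [hzl]; exact RmAux.good_special_left hrec hlm huniq') hzbad
        · obtain ⟨j1, hj11, hjocc⟩ := RmAux.occ_unbounded hrec hzf 1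
          have hj1occ : OccursAt u z ((j1 - 1) + 1) := by
            rwa [show j1 - 1 + 1 = j1 by omega]
          have hmem : u (j1 - 1) ∈ leftExt u z := RmAux.leftExt_mem_of_occ hj1occ
          have hforced : ∀ c, IsFactor u (c :: z) → c = u (j1 - 1) := by
            intro c hc
            unfold LeftSpecial at hzLS
            push_neg at hzLS
            exact RmAux.eq_of_ncard_le_one (Set.toFinite _) (by omega) hmem hc
          refine ⟨u (j1 - 1) :: z, ⟨j1 - 1, RmAux.occ_cons_iff.mpr ⟨rfl, hj1occ⟩⟩, ?_,
            Or.inr ⟨_, rfl, RmAux.occ_left_ext hforced⟩⟩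
          intro hGood'
          exact hzbad (RmAux.microL hrec hforced hGood')
      · have hzr : z = r := hruniq z hzf rfl hRS
        have huniq' : ∀ v, IsFactor u v → v.length = r.length → RightSpecial u v → v = r :=
          fun v h1 h2 h3 => hruniq v h1 (h2.trans hrlen) h3
        exact absurd (by rw [hzr]; exact RmAux.good_special_right hrec hrm huniq') hzbad
    · obtain ⟨j, hj⟩ := hzf
      have hforced := RmAux.forced_right hj hRS
      have hiff := RmAux.occ_right_ext hforced
      refine ⟨z ++ [u (j + z.length)], ⟨j, (hiff j).mp hj⟩, ?_,
        Or.inl ⟨_, rfl, hiff⟩⟩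
      rw [← RmAux.returnWords_congr hiff]
      exact hzbad
  -- the chain
  let Inv : List A × ℕ → Prop := fun p => IsFactor u p.1 ∧
      ¬ ((returnWords u p.1).Finite ∧ (returnWords u p.1).ncard = m) ∧
      (∀ q, OccursAt u p.1 q ↔ OccursAt u w (q + p.2))
  have hInv0 : Inv (w, 0) := ⟨hw, hbad, fun q => by simp⟩
  have hstepP : ∀ p, Inv p → ∃ p', Inv p' ∧ p'.1.length = p.1.length + 1 ∧
      (p'.2 = p.2 ∨ p'.2 = p.2 + 1) := by
    rintro ⟨z, σ⟩ ⟨h1, h2, h3⟩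
    obtain ⟨z', hz'f, hz'bad, hcase⟩ := hstep z h1 h2
    rcases hcase with ⟨b, rfl, hiff⟩ | ⟨a, rfl, hiff⟩
    · refine ⟨(z ++ [b], σ), ⟨hz'f, hz'bad, fun q => ?_⟩, by simp, Or.inl rfl⟩
      exact (hiff q).symm.trans (h3 q)
    · refine ⟨(a :: z, σ + 1), ⟨hz'f, hz'bad, fun q => ?_⟩, by simp, Or.inr rfl⟩
      rw [hiff q, h3 (q + 1), show q + 1 + σ = q + (σ + 1) by omega]
  let F : {p : List A × ℕ // Inv p} → {p : List A × ℕ // Inv p} :=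
    fun p => ⟨(hstepP p.1 p.2).choose, (hstepP p.1 p.2).choose_spec.1⟩
  let c : ℕ → {p : List A × ℕ // Inv p} := fun k => Nat.rec ⟨(w, 0), hInv0⟩ (fun _ q => F q) k
  have hc0 : (c 0).1 = (w, 0) := rfl
  have hspec : ∀ k, ((c (k + 1)).1).1.length = ((c k).1).1.length + 1 ∧
      (((c (k + 1)).1).2 = ((c k).1).2 ∨ ((c (k + 1)).1).2 = ((c k).1).2 + 1) := by
    intro k
    have hcs : c (k + 1) = F (c k) := rfl
    rw [hcs]
    exact (hstepP (c k).1 (c k).2).choose_spec.2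
  have hOcciff : ∀ k q, OccursAt u ((c k).1).1 q ↔ OccursAt u w (q + ((c k).1).2) :=
    fun k => ((c k).2).2.2
  have hlen : ∀ k, ((c k).1).1.length = w.length + k := by
    intro k
    induction k with
    | zero => rw [hc0]; simp
    | succ k ih =>
      rw [(hspec k).1, ih]; omega
  have hsk0 : ((c 0).1).2 = 0 := by rw [hc0]
  have hsk_le_k : ∀ k, ((c k).1).2 ≤ k := by
    intro k
    induction k with
    | zero => omega
    | succ k ih => rcases (hspec k).2 with he | he <;> omega
  have hmono' : ∀ k d, ((c k).1).2 ≤ ((c (k + d)).1).2 := by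
    intro k d
    induction d with
    | zero => exact le_refl _
    | succ d ih =>
      have := (hspec (k + d)).2
      rw [show k + (d + 1) = (k + d) + 1 by omega]
      rcases this with he | he <;> omega
  have hmono : ∀ k k', k ≤ k' → ((c k).1).2 ≤ ((c k').1).2 := by
    intro k k' hkk'
    have := hmono' k (k' - k)
    rwa [show k + (k' - k) = k' by omega] at this
  by_cases hA : ∀ P, ∃ k, P ≤ ((c k).1).2
  · -- unbounded shifts: every value is hit
    have hhit : ∀ P, ∃ k, ((c k).1).2 = P := by
      intro P
      obtain ⟨k, hk⟩ := hA P
      have haux : ∀ k P, P ≤ ((c k).1).2 → ∃ k', ((c k').1).2 = P := by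
        intro k
        induction k with
        | zero => intro P hP; exact ⟨0, by omega⟩
        | succ k ih =>
          intro P hP
          rcases (hspec k).2 with he | he
          · exact ih P (by omega)
          · by_cases hP2 : P ≤ ((c k).1).2
            · exact ih P hP2
            · exact ⟨k + 1, by omega⟩
      exact haux k P hk
    have hper : ∀ p p', OccursAt u w p → OccursAt u w p' → p < p' →
        ∀ q, q < p + w.length → u q = u (q + (p' - p)) := by
      intro p p' hp hp' hlt q hq
      obtain ⟨k, hk⟩ := hhit p
      have h0 : OccursAt u ((c k).1).1 0 := by
        apply (hOcciff k 0).mpr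
        rw [hk]
        simpa using hp
      have h1 : OccursAt u ((c k).1).1 (p' - p) := by
        apply (hOcciff k (p' - p)).mpr
        rw [hk, show p' - p + p = p' by omega]
        exact hp'
      have hag := RmAux.occ_agree h0 h1 q
        (by rw [hlen k]; have := hsk_le_k k; omega)
      rw [show (0 : ℕ) + q = q by omega, show p' - p + q = q + (p' - p) by omega] at hag
      exact hag
    have htr₁ : ∀ p p' x, OccursAt u w p → OccursAt u w p' → p < p' → OccursAt u w x →
        x ≤ p → OccursAt u w (x + (p' - p)) := by
      intro p p' x hp hp' hlt hx hxle
      apply RmAux.occ_of_agree hx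
      intro i hi
      have hh := hper p p' hp hp' hlt (x + i) (by omega)
      rw [show x + i + (p' - p) = x + (p' - p) + i by omega] at hh
      exact hh.symm
    have htr₂ : ∀ p p' y, OccursAt u w p → OccursAt u w p' → p < p' → OccursAt u w y →
        p' - p ≤ y → y ≤ p' → OccursAt u w (y - (p' - p)) := by
      intro p p' y hp hp' hlt hy hy1 hy2
      apply RmAux.occ_of_agree hy
      intro i hi
      have hh := hper p p' hp hp' hlt (y - (p' - p) + i) (by omega)
      rw [show y - (p' - p) + i + (p' - p) = y + i by omega] at hh
      exact hh
    obtain ⟨g, hg, hgap⟩ := RmAux.gaps_const (O := OccursAt u w)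
      (fun M => RmAux.occ_unbounded hrec hw M) htr₁ htr₂
    have hperall : ∀ q, 0 ≤ q → u (q + g) = u q := by
      intro q _
      obtain ⟨p, hpq, hp⟩ := RmAux.occ_unbounded hrec hw (q + 1)
      obtain ⟨p', hlt', hp'occ, hbet⟩ := RmAux.exists_next hrec hw p
      have hgap' : p' - p = g := hgap p p' hp hp'occ hlt' hbet
      have hh := hper p p' hp hp'occ hlt' q (by omega)
      rw [hgap'] at hh
      exact hh.symm
    exact RmAux.periodic_contra hrec h hg hperall
  · -- bounded shifts
    push_neg at hA
    obtain ⟨P, hP⟩ := hA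
    have hconst : ∃ K, ∀ k, K ≤ k → ((c k).1).2 = ((c K).1).2 := by
      by_contra hcon
      push_neg at hcon
      have grow : ∀ i, ∃ k, i ≤ ((c k).1).2 := by
        intro i
        induction i with
        | zero => exact ⟨0, by omega⟩
        | succ i ih =>
          obtain ⟨k, hk⟩ := ih
          obtain ⟨k', hk'1, hk'2⟩ := hcon k
          have h1 := hmono k k' hk'1
          have h2 : ((c k).1).2 < ((c k').1).2 := lt_of_le_of_ne h1 (fun he => hk'2 he.symm)
          exact ⟨k', by omega⟩
      obtain ⟨k, hk⟩ := grow P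
      have := hP k
      omega
    obtain ⟨K, hK⟩ := hconst
    obtain ⟨p, hp1, hpocc⟩ := RmAux.occ_unbounded hrec hw ((c K).1).2
    obtain ⟨p', hplt, hp'occ, -⟩ := RmAux.exists_next hrec hw p
    have hfut : ∀ q, p - ((c K).1).2 ≤ q → u (q + (p' - p)) = u q := by
      intro q hq
      have hkK : K ≤ max K (q + 1) := le_max_left _ _
      have hsk : ((c (max K (q + 1))).1).2 = ((c K).1).2 := hK _ hkK
      have h0 : OccursAt u ((c (max K (q + 1))).1).1 (p - ((c K).1).2) := by
        apply (hOcciff _ _).mpr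
        rw [hsk, show p - ((c K).1).2 + ((c K).1).2 = p by omega]
        exact hpocc
      have h1 : OccursAt u ((c (max K (q + 1))).1).1 (p' - ((c K).1).2) := by
        apply (hOcciff _ _).mpr
        rw [hsk, show p' - ((c K).1).2 + ((c K).1).2 = p' by omega]
        exact hp'occ
      have hag := RmAux.occ_agree h0 h1 (q - (p - ((c K).1).2))
        (by rw [hlen]; have : q + 1 ≤ max K (q + 1) := le_max_right _ _; omega)
      rw [show p - ((c K).1).2 + (q - (p - ((c K).1).2)) = q by omega,
          show p' - ((c K).1).2 + (q - (p - ((c K).1).2)) = q + (p' - p) by omega] at hag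
      exact hag.symm
    exact RmAux.periodic_contra hrec h (show 0 < p' - p by omega) hfut
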